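/- For all n ≥ 1, the number of permutations of length n avoiding all of the patterns 231, 312, 4321, and 21543 equals F_{n+1} - 1, where F is the Fibonacci sequence with F_0 = F_1 = 1. -/

import Mathlib

open Finset MvPolynomial
open scoped Classical

/-- `π` contains the pattern given by the list `p` (one-line notation). -/
def ContainsPat {n : ℕ} (π : Equiv.Perm (Fin n)) (p : List ℕ) : Prop :=
  ∃ f : Fin p.length → Fin n, StrictMono f ∧
    ∀ i j : Fin p.length, p.get i < p.get j ↔ π (f i) < π (f j)

/-- `π` avoids every pattern in the list `S`. -/
def AvoidsAll {n : ℕ} (π : Equiv.Perm (Fin n)) (S : List (List ℕ)) : Prop :=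
  ∀ p ∈ S, ¬ ContainsPat π p

/-- Fibonacci numbers with the convention `F 0 = F 1 = 1`. -/
def fib' : ℕ → ℕ
  | 0 => 1
  | 1 => 1
  | n + 2 => fib' (n + 1) + fib' n

/-- number of inversions -/
def invNum {n : ℕ} (π : Equiv.Perm (Fin n)) : ℕ :=
  (Finset.univ.filter (fun p : Fin n × Fin n => p.1 < p.2 ∧ π p.2 < π p.1)).card

/-- The last `k` entries of `π` contain pattern `p`. -/
def SegContainsPat {n : ℕ} (π : Equiv.Perm (Fin n)) (k : ℕ) (p : List ℕ) : Prop :=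
  ∃ f : Fin p.length → Fin n, StrictMono f ∧ (∀ i, n - k ≤ ((f i : Fin n) : ℕ)) ∧
    ∀ i j : Fin p.length, p.get i < p.get j ↔ π (f i) < π (f j)

/-- The last `k` entries of `π` are the top `k` values and form a Fibonacci permutation. -/
def IsFinalFib {n : ℕ} (π : Equiv.Perm (Fin n)) (k : ℕ) : Prop :=
  k ≤ n ∧ (∀ i : Fin n, n - k ≤ (i : ℕ) → n - k ≤ ((π i : Fin n) : ℕ)) ∧
    ∀ p ∈ [[2,3,1],[3,1,2],[3,2,1]], ¬ SegContainsPat π k p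

/-- `Fib(π)`: length of the longest final segment of `π` consisting of the top values
and avoiding 231, 312, 321. -/
noncomputable def fibStat {n : ℕ} (π : Equiv.Perm (Fin n)) : ℕ := sSup {k | IsFinalFib π k}

/-- direct sum `π ⊕ σ` -/
def dsum {m n : ℕ} (π : Equiv.Perm (Fin m)) (σ : Equiv.Perm (Fin n)) :
    Equiv.Perm (Fin (m + n)) :=
  finSumFinEquiv.symm.trans ((Equiv.sumCongr π σ).trans finSumFinEquiv)

/-- skew sum `π ⊖ σ` -/
def sskew {m n : ℕ} (π : Equiv.Perm (Fin m)) (σ : Equiv.Perm (Fin n)) :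
    Equiv.Perm (Fin (m + n)) :=
  finSumFinEquiv.symm.trans ((Equiv.sumCongr π σ).trans
    ((Equiv.sumComm (Fin m) (Fin n)).trans (finSumFinEquiv.trans (finCongr (Nat.add_comm n m)))))

/-- the pattern 321 as a permutation of `Fin 3` -/
def perm321 : Equiv.Perm (Fin 3) := Fin.revPerm

/-- the pattern 312 as a permutation of `Fin 3` -/
def perm312 : Equiv.Perm (Fin 3) := (finRotate 3)⁻¹

/-- binomial coefficient on ℤ, zero when undefined -/
def C (a b : ℤ) : ℤ := if 0 ≤ b ∧ b ≤ a then (a.toNat.choose b.toNat : ℤ) else 0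

/-- generating function `G_n(v,q)` with `v = X 0`, `q = X 1` -/
noncomputable def G (n : ℕ) (S : List (List ℕ)) : MvPolynomial (Fin 2) ℤ :=
  ∑ π ∈ Finset.univ.filter (fun π : Equiv.Perm (Fin n) => AvoidsAll π S),
    X 0 ^ fibStat π * X 1 ^ invNum π

/-- Fibonacci generating function `F_n(q)` with `q = X 1` -/
noncomputable def Fq (n : ℕ) : MvPolynomial (Fin 2) ℤ :=
  ∑ π ∈ Finset.univ.filter
      (fun π : Equiv.Perm (Fin n) => AvoidsAll π [[2,3,1],[3,1,2],[3,2,1]]),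
    X 1 ^ invNum π

section constructors
variable {n : ℕ} (π : Equiv.Perm (Fin n))

lemma contains231 (a b c : Fin n)
    (hab : a < b) (hbc : b < c) (h1 : π c < π a) (h2 : π a < π b) :
    ContainsPat π [2,3,1] := by
  have hac := hab.trans hbc
  have h3 := h1.trans h2
  refine ⟨![a,b,c], ?_, ?_⟩
  · intro i j hij
    fin_cases i <;> fin_cases j <;>
      first
      | exact absurd hij (by decide)
      | exact hab | exact hbc | exact hac
  · intro i j
    fin_cases i <;> fin_cases j <;>
      first
      | exact iff_of_false (by decide) (lt_irrefl _)
      | exact iff_of_true (by decide) h1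
      | exact iff_of_true (by decide) h2
      | exact iff_of_true (by decide) h3
      | exact iff_of_false (by decide) (asymm h1)
      | exact iff_of_false (by decide) (asymm h2)
      | exact iff_of_false (by decide) (asymm h3)

lemma contains312 (a b c : Fin n)
    (hab : a < b) (hbc : b < c) (h1 : π b < π c) (h2 : π c < π a) :
    ContainsPat π [3,1,2] := by
  have hac := hab.trans hbc
  have h3 := h1.trans h2
  refine ⟨![a,b,c], ?_, ?_⟩
  · intro i j hij
    fin_cases i <;> fin_cases j <;>
      first
      | exact absurd hij (by decide)
      | exact hab | exact hbc | exact hac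
  · intro i j
    fin_cases i <;> fin_cases j <;>
      first
      | exact iff_of_false (by decide) (lt_irrefl _)
      | exact iff_of_true (by decide) h1
      | exact iff_of_true (by decide) h2
      | exact iff_of_true (by decide) h3
      | exact iff_of_false (by decide) (asymm h1)
      | exact iff_of_false (by decide) (asymm h2)
      | exact iff_of_false (by decide) (asymm h3)

lemma contains4321 (a b c d : Fin n)
    (hab : a < b) (hbc : b < c) (hcd : c < d)
    (h1 : π d < π c) (h2 : π c < π b) (h3 : π b < π a) :
    ContainsPat π [4,3,2,1] := by
  have hac := hab.trans hbc
  have hbd := hbc.trans hcd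
  have had := hab.trans hbd
  have h4 := h1.trans h2
  have h5 := h2.trans h3
  have h6 := h1.trans h5
  refine ⟨![a,b,c,d], ?_, ?_⟩
  · intro i j hij
    fin_cases i <;> fin_cases j <;>
      first
      | exact absurd hij (by decide)
      | exact hab | exact hbc | exact hcd | exact hac | exact hbd | exact had
  · intro i j
    fin_cases i <;> fin_cases j <;>
      first
      | exact iff_of_false (by decide) (lt_irrefl _)
      | exact iff_of_true (by decide) h1
      | exact iff_of_true (by decide) h2
      | exact iff_of_true (by decide) h3
      | exact iff_of_true (by decide) h4
      | exact iff_of_true (by decide) h5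
      | exact iff_of_true (by decide) h6
      | exact iff_of_false (by decide) (asymm h1)
      | exact iff_of_false (by decide) (asymm h2)
      | exact iff_of_false (by decide) (asymm h3)
      | exact iff_of_false (by decide) (asymm h4)
      | exact iff_of_false (by decide) (asymm h5)
      | exact iff_of_false (by decide) (asymm h6)

lemma contains21543 (a b c d e : Fin n)
    (hab : a < b) (hbc : b < c) (hcd : c < d) (hde : d < e)
    (h1 : π b < π a) (h2 : π a < π e) (h3 : π e < π d) (h4 : π d < π c) :
    ContainsPat π [2,1,5,4,3] := by
  have hac := hab.trans hbc
  have hbd := hbc.trans hcd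
  have hce := hcd.trans hde
  have had := hab.trans hbd
  have hbe := hbd.trans hde
  have hae := had.trans hde
  -- value order: π b < π a < π e < π d < π c
  have g1 := h1.trans h2   -- b < e
  have g2 := h2.trans h3   -- a < d
  have g3 := h3.trans h4   -- e < c
  have g4 := h1.trans g2   -- b < d
  have g5 := h2.trans g3   -- a < c
  have g6 := h1.trans g5   -- b < c
  refine ⟨![a,b,c,d,e], ?_, ?_⟩
  · intro i j hij
    fin_cases i <;> fin_cases j <;>
      first
      | exact absurd hij (by decide)
      | exact hab | exact hbc | exact hcd | exact hde
      | exact hac | exact hbd | exact hce | exact had | exact hbe | exact hae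
  · intro i j
    fin_cases i <;> fin_cases j <;>
      first
      | exact iff_of_false (by decide) (lt_irrefl _)
      | exact iff_of_true (by decide) h1
      | exact iff_of_true (by decide) h2
      | exact iff_of_true (by decide) h3
      | exact iff_of_true (by decide) h4
      | exact iff_of_true (by decide) g1
      | exact iff_of_true (by decide) g2
      | exact iff_of_true (by decide) g3
      | exact iff_of_true (by decide) g4
      | exact iff_of_true (by decide) g5
      | exact iff_of_true (by decide) g6
      | exact iff_of_false (by decide) (asymm h1)
      | exact iff_of_false (by decide) (asymm h2)
      | exact iff_of_false (by decide) (asymm h3)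
      | exact iff_of_false (by decide) (asymm h4)
      | exact iff_of_false (by decide) (asymm g1)
      | exact iff_of_false (by decide) (asymm g2)
      | exact iff_of_false (by decide) (asymm g3)
      | exact iff_of_false (by decide) (asymm g4)
      | exact iff_of_false (by decide) (asymm g5)
      | exact iff_of_false (by decide) (asymm g6)

end constructors

section extractors
variable {n : ℕ} {π : Equiv.Perm (Fin n)}

lemma of_contains231 (h : ContainsPat π [2,3,1]) :
    ∃ a b c : Fin n, a < b ∧ b < c ∧ π c < π a ∧ π a < π b := by
  obtain ⟨f, hm, hiff⟩ := h
  exact ⟨f ⟨0, by decide⟩, f ⟨1, by decide⟩, f ⟨2, by decide⟩,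
    hm (by decide), hm (by decide),
    (hiff ⟨2, by decide⟩ ⟨0, by decide⟩).1 (by decide),
    (hiff ⟨0, by decide⟩ ⟨1, by decide⟩).1 (by decide)⟩

lemma of_contains312 (h : ContainsPat π [3,1,2]) :
    ∃ a b c : Fin n, a < b ∧ b < c ∧ π b < π c ∧ π c < π a := by
  obtain ⟨f, hm, hiff⟩ := h
  exact ⟨f ⟨0, by decide⟩, f ⟨1, by decide⟩, f ⟨2, by decide⟩,
    hm (by decide), hm (by decide),
    (hiff ⟨1, by decide⟩ ⟨2, by decide⟩).1 (by decide),
    (hiff ⟨2, by decide⟩ ⟨0, by decide⟩).1 (by decide)⟩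

lemma of_contains4321 (h : ContainsPat π [4,3,2,1]) :
    ∃ a b c d : Fin n, a < b ∧ b < c ∧ c < d ∧ π d < π c ∧ π c < π b ∧ π b < π a := by
  obtain ⟨f, hm, hiff⟩ := h
  exact ⟨f ⟨0, by decide⟩, f ⟨1, by decide⟩, f ⟨2, by decide⟩, f ⟨3, by decide⟩,
    hm (by decide), hm (by decide), hm (by decide),
    (hiff ⟨3, by decide⟩ ⟨2, by decide⟩).1 (by decide),
    (hiff ⟨2, by decide⟩ ⟨1, by decide⟩).1 (by decide),
    (hiff ⟨1, by decide⟩ ⟨0, by decide⟩).1 (by decide)⟩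

lemma of_contains21543 (h : ContainsPat π [2,1,5,4,3]) :
    ∃ a b c d e : Fin n, a < b ∧ b < c ∧ c < d ∧ d < e ∧
      π b < π a ∧ π a < π e ∧ π e < π d ∧ π d < π c := by
  obtain ⟨f, hm, hiff⟩ := h
  exact ⟨f ⟨0, by decide⟩, f ⟨1, by decide⟩, f ⟨2, by decide⟩, f ⟨3, by decide⟩, f ⟨4, by decide⟩,
    hm (by decide), hm (by decide), hm (by decide), hm (by decide),
    (hiff ⟨1, by decide⟩ ⟨0, by decide⟩).1 (by decide),
    (hiff ⟨0, by decide⟩ ⟨4, by decide⟩).1 (by decide),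
    (hiff ⟨4, by decide⟩ ⟨3, by decide⟩).1 (by decide),
    (hiff ⟨3, by decide⟩ ⟨2, by decide⟩).1 (by decide)⟩

end extractors

section GoodDef
variable {n : ℕ}

def Good (π : Equiv.Perm (Fin n)) : Prop :=
  ∀ i : Fin n, π (π i) = i ∧ (π i : ℕ) ≤ (i : ℕ) + 2 ∧ (i : ℕ) ≤ (π i : ℕ) + 2 ∧
    (((π i : ℕ) = (i : ℕ) + 2) → ∀ j : Fin n, j < i → π j = j)

instance : ∀ {m : ℕ}, DecidablePred (@Good m) := fun {m} π => by
  unfold Good; infer_instance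

variable {π : Equiv.Perm (Fin n)}

local notation "AV" => AvoidsAll

lemma pinj (π : Equiv.Perm (Fin n)) {a b : Fin n} (h : (π a : ℕ) = (π b : ℕ)) : a = b :=
  π.injective (Fin.ext h)

lemma good_inv (hg : Good π) (i : Fin n) : π (π i) = i := (hg i).1
lemma good_ub (hg : Good π) (i : Fin n) : (π i : ℕ) ≤ (i : ℕ) + 2 := (hg i).2.1
lemma good_lb (hg : Good π) (i : Fin n) : (i : ℕ) ≤ (π i : ℕ) + 2 := (hg i).2.2.1
lemma good_blk (hg : Good π) {i : Fin n} (h : (π i : ℕ) = (i : ℕ) + 2) :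
    ∀ j : Fin n, j < i → π j = j := (hg i).2.2.2 h

/-- if `π i = i+2` then the middle point `i+1` is fixed -/
lemma good_mid (hg : Good π) {i m : Fin n} (h : (π i : ℕ) = (i : ℕ) + 2)
    (hm : (m : ℕ) = (i : ℕ) + 1) : π m = m := by
  have h2 : (π (π i) : ℕ) = i := by rw [good_inv hg i]
  -- possible values of π m
  have hub := good_ub hg m
  have hlb := good_lb hg m
  -- π m ≠ π i  value i+2, π m ≠ value i (= π (π i))
  by_contra hne
  have h1 : (π m : ℕ) ≠ (i : ℕ) + 2 := fun hc => by
    have : m = i := pinj π (by omega)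
    omega
  have h0 : (π m : ℕ) ≠ (i : ℕ) := fun hc => by
    have : m = π i := pinj π (by omega)
    have : (m : ℕ) = (π i : ℕ) := by rw [this]
    omega
  have hmm : (π m : ℕ) ≠ (m : ℕ) := fun hc => hne (Fin.ext hc)
  -- remaining: π m = i+3  (blk gives contradiction) or π m = i-1
  rcases Nat.lt_or_ge (π m : ℕ) (m : ℕ) with hlt | hge
  · -- π m value = i - 1 < i : use blk at i : j := π m is fixed?? no...
    -- w := π m, π w = m (involution), w < i so blk at i gives π w = w, contra
    have hw : π (π m) = m := good_inv hg m
    have hwlt : π m < i := by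
      rw [Fin.lt_def]; omega
    have := good_blk hg h (π m) hwlt
    rw [this] at hw
    exact hne hw
  · -- π m = i+3 = m + 2 : blk at m gives π i = i, contra
    have hm3 : (π m : ℕ) = (m : ℕ) + 2 := by omega
    have hilt : i < m := by rw [Fin.lt_def]; omega
    have := good_blk hg hm3 i hilt
    have : (π i : ℕ) = (i : ℕ) := by rw [this]
    omega

/-- main monotonicity: positions at distance ≥ 3 are value-increasing -/
lemma good_M (hg : Good π) {a c : Fin n} (h : (a : ℕ) + 3 ≤ (c : ℕ)) :
    (π a : ℕ) < (π c : ℕ) := by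
  have hub := good_ub hg a
  have hlb := good_lb hg c
  have hne : (π c : ℕ) ≠ (π a : ℕ) := fun hc => by have := pinj π hc; subst this; omega
  rcases Nat.lt_or_ge (a : ℕ) (π a : ℕ) with hgt | hle
  · -- π a = a+1 or a+2
    rcases Nat.lt_or_ge ((a : ℕ) + 1) (π a : ℕ) with h2 | h1
    · -- π a = a + 2
      have ha2 : (π a : ℕ) = (a : ℕ) + 2 := by omega
      -- value a is at position π a; value a+1 is fixed at the mid point
      have hva : (π (π a) : ℕ) = (a : ℕ) := by rw [good_inv hg a]
      have hmidn : (a : ℕ) + 1 < n := by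
        have := (π a).isLt; omega
      set m : Fin n := ⟨(a : ℕ) + 1, by omega⟩ with hm
      have hmid : π m = m := good_mid hg ha2 rfl
      have hvm : (π m : ℕ) = (a : ℕ) + 1 := by rw [hmid]
      -- π c ∉ {a, a+1, a+2} and π c ≥ c - 2 ≥ a + 1
      have hc0 : (π c : ℕ) ≠ (a : ℕ) := fun hc => by
        have : c = π a := pinj π (by omega)
        have : (c : ℕ) = (π a : ℕ) := by rw [this]
        omega
      have hc1 : (π c : ℕ) ≠ (a : ℕ) + 1 := fun hc => by
        have : c = m := pinj π (by omega)
        have : (c : ℕ) = (m : ℕ) := by rw [this]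
        simp [hm] at this; omega
      omega
    · -- π a = a + 1 : π c ≥ a+1 and ≠ a+1, ≠ a
      have hc0 : (π c : ℕ) ≠ (a : ℕ) := fun hc => by
        -- value a is at π a... here π (π a) = a so value a at position π a (val a+1)
        have : c = π a := pinj π (by rw [good_inv hg a]; omega)
        have : (c : ℕ) = (π a : ℕ) := by rw [this]
        omega
      omega
  · omega

theorem good_avoids (hg : Good π) :
    AvoidsAll π [[2,3,1],[3,1,2],[4,3,2,1],[2,1,5,4,3]] := by
  intro p hp hcont
  simp only [List.mem_cons, List.mem_singleton] at hp
  rcases hp with rfl | rfl | rfl | rfl | h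
  · -- 231
    obtain ⟨a, b, c, hab, hbc, h1, h2⟩ := of_contains231 hcont
    rw [Fin.lt_def] at hab hbc h1 h2
    have hc2 : (c : ℕ) ≤ (a : ℕ) + 2 := by
      by_contra hc
      exact absurd (good_M hg (a := a) (c := c) (by omega)) (by omega)
    have hb1 : (b : ℕ) = (a : ℕ) + 1 := by omega
    have hc1 : (c : ℕ) = (a : ℕ) + 2 := by omega
    have hlbc : (c : ℕ) ≤ (π c : ℕ) + 2 := good_lb hg c
    have hub : (π a : ℕ) ≤ (a : ℕ) + 2 := good_ub hg a
    -- π a ≥ a + 1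
    rcases Nat.lt_or_ge (π a : ℕ) ((a:ℕ)+2) with hA | hA
    · -- π a = a+1, so π a = b, π b = a
      have hba : b = π a := Fin.ext (by omega)
      have : (π b : ℕ) = (a : ℕ) := by rw [hba, good_inv hg a]
      omega
    · have ha2 : (π a : ℕ) = (a : ℕ) + 2 := by omega
      have hmid : π b = b := good_mid hg ha2 hb1
      have : (π b : ℕ) = (b : ℕ) := by rw [hmid]
      omega
  · -- 312
    obtain ⟨a, b, c, hab, hbc, h1, h2⟩ := of_contains312 hcont
    rw [Fin.lt_def] at hab hbc h1 h2
    have hc2 : (c : ℕ) ≤ (a : ℕ) + 2 := by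
      by_contra hc
      exact absurd (good_M hg (a := a) (c := c) (by omega)) (by omega)
    have hb1 : (b : ℕ) = (a : ℕ) + 1 := by omega
    have hc1 : (c : ℕ) = (a : ℕ) + 2 := by omega
    have hlbb : (b : ℕ) ≤ (π b : ℕ) + 2 := good_lb hg b
    have hub : (π a : ℕ) ≤ (a : ℕ) + 2 := good_ub hg a
    rcases Nat.lt_or_ge (a : ℕ) (π a : ℕ) with hA | hA
    · rcases Nat.lt_or_ge ((a : ℕ) + 1) (π a : ℕ) with hB | hB
      · -- π a = a + 2 = c
        have hca : c = π a := Fin.ext (by omega)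
        have hpc : (π c : ℕ) = (a : ℕ) := by rw [hca, good_inv hg a]
        have hmid : π b = b := good_mid hg (by omega) hb1
        have : (π b : ℕ) = (b : ℕ) := by rw [hmid]
        omega
      · -- π a = a+1 = b, π b = a
        have hba : b = π a := Fin.ext (by omega)
        have : (π b : ℕ) = (a : ℕ) := by rw [hba, good_inv hg a]
        omega
    · omega
  · -- 4321
    obtain ⟨a, b, c, d, hab, hbc, hcd, h1, h2, h3⟩ := of_contains4321 hcont
    rw [Fin.lt_def] at hab hbc hcd h1 h2 h3
    have hb : (b : ℕ) ≤ (a : ℕ) + 2 := by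
      by_contra hc
      exact absurd (good_M hg (a := a) (c := b) (by omega)) (by omega)
    have hd : (d : ℕ) ≤ (a : ℕ) + 2 := by
      by_contra hc
      exact absurd (good_M hg (a := a) (c := d) (by omega)) (by omega)
    omega
  · -- 21543
    obtain ⟨a, b, c, d, e, hab, hbc, hcd, hde, h1, h2, h3, h4⟩ := of_contains21543 hcont
    rw [Fin.lt_def] at hab hbc hcd hde h1 h2 h3 h4
    have he : (e : ℕ) ≤ (c : ℕ) + 2 := by
      by_contra hc
      exact absurd (good_M hg (a := c) (c := e) (by omega)) (by omega)
    have hd1 : (d : ℕ) = (c : ℕ) + 1 := by omega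
    have he1 : (e : ℕ) = (c : ℕ) + 2 := by omega
    have hlbe : (e : ℕ) ≤ (π e : ℕ) + 2 := good_lb hg e
    have hub : (π c : ℕ) ≤ (c : ℕ) + 2 := good_ub hg c
    have hc2 : (π c : ℕ) = (c : ℕ) + 2 := by omega
    have hfa : π a = a := good_blk hg hc2 a (by rw [Fin.lt_def]; omega)
    have hfb : π b = b := good_blk hg hc2 b (by rw [Fin.lt_def]; omega)
    have : (π a : ℕ) = (a : ℕ) := by rw [hfa]
    have : (π b : ℕ) = (b : ℕ) := by rw [hfb]
    omega
  · exact absurd h List.not_mem_nil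
end GoodDef
section Counting
variable {n : ℕ}

lemma card_lt_val (π : Equiv.Perm (Fin n)) (v : Fin n) :
    (Finset.univ.filter fun j => π j < v).card = (v : ℕ) := by
  rw [← Fin.card_Iio v]
  apply Finset.card_bij (fun j _ => π j)
  · intro a ha
    simp only [Finset.mem_filter] at ha
    simpa using ha.2
  · intro a _ b _ h
    exact π.injective h
  · intro b hb
    refine ⟨π.symm b, ?_, by simp⟩
    simp only [Finset.mem_filter, Finset.mem_univ, true_and, Equiv.apply_symm_apply]
    simpa using hb

lemma card_gt_val (π : Equiv.Perm (Fin n)) (v : Fin n) :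
    (Finset.univ.filter fun j => v < π j).card = n - 1 - (v : ℕ) := by
  rw [← Fin.card_Ioi v]
  apply Finset.card_bij (fun j _ => π j)
  · intro a ha
    simp only [Finset.mem_filter] at ha
    simpa using ha.2
  · intro a _ b _ h
    exact π.injective h
  · intro b hb
    refine ⟨π.symm b, ?_, by simp⟩
    simp only [Finset.mem_filter, Finset.mem_univ, true_and, Equiv.apply_symm_apply]
    simpa using hb

lemma exists_three {T : Finset (Fin n)} (h : 3 ≤ T.card) :
    ∃ a b c, a ∈ T ∧ b ∈ T ∧ c ∈ T ∧ a < b ∧ b < c := by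
  have h0 : T.Nonempty := Finset.card_pos.mp (by omega)
  set a := T.min' h0 with ha
  set T1 := T.erase a with hT1
  have hc1 : 2 ≤ T1.card := by
    rw [hT1, Finset.card_erase_of_mem (T.min'_mem h0)]; omega
  have h1 : T1.Nonempty := Finset.card_pos.mp (by omega)
  set b := T1.min' h1 with hb
  set T2 := T1.erase b with hT2
  have hc2 : 1 ≤ T2.card := by
    rw [hT2, Finset.card_erase_of_mem (T1.min'_mem h1)]; omega
  have h2 : T2.Nonempty := Finset.card_pos.mp (by omega)
  set c := T2.min' h2 with hc
  have hbT : b ∈ T1 := T1.min'_mem h1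
  have hcT2 : c ∈ T2 := T2.min'_mem h2
  have hcT1 : c ∈ T1 := Finset.mem_of_mem_erase hcT2
  refine ⟨a, b, c, T.min'_mem h0, Finset.mem_of_mem_erase hbT, Finset.mem_of_mem_erase hcT1, ?_, ?_⟩
  · exact lt_of_le_of_ne (T.min'_le b (Finset.mem_of_mem_erase hbT))
      (Ne.symm (Finset.ne_of_mem_erase hbT))
  · exact lt_of_le_of_ne (T1.min'_le c hcT1) (Ne.symm (Finset.ne_of_mem_erase hcT2))

/-- extract an element of a filtered set minus a lower interval -/
lemma filter_above_card (π : Equiv.Perm (Fin n)) (P : Fin n → Prop) [DecidablePred P] (i : Fin n)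
    (hP : ¬ P i) (k : ℕ) (hk : (Finset.univ.filter P).card = k) :
    k ≤ ((Finset.univ.filter P).filter fun j => i < j).card + (i : ℕ) := by
  classical
  set S := Finset.univ.filter P with hS
  set T := S.filter (fun j => i < j) with hT
  have hsub : S \ T ⊆ Finset.Iio i := by
    intro j hj
    simp only [hT, Finset.mem_sdiff, Finset.mem_filter, not_and] at hj
    have hji : ¬ i < j := fun hc => hj.2 hj.1 hc
    have hne : j ≠ i := by
      rintro rfl
      simp only [hS, Finset.mem_filter] at hj
      exact hP hj.1.2
    simp only [Finset.mem_Iio]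
    rcases lt_or_ge j i with h | h
    · exact h
    · exact absurd (lt_of_le_of_ne h (Ne.symm hne)) hji
  have h1 : (S \ T).card ≤ (i : ℕ) := by
    have := Finset.card_le_card hsub
    simpa using this
  have h2 : S.card ≤ T.card + (S \ T).card := by
    have := Finset.card_sdiff_add_card_eq_card (Finset.filter_subset (fun j => i < j) S)
    rw [← hT] at this
    omega
  omega

end Counting
section AvoidsGood
variable {n : ℕ} {π : Equiv.Perm (Fin n)}

def Pats : List (List ℕ) := [[2,3,1],[3,1,2],[4,3,2,1],[2,1,5,4,3]]

variable (hav : AvoidsAll π Pats)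

lemma filter_below_card (P : Fin n → Prop) [DecidablePred P] (i : Fin n)
    (hP : ¬ P i) (k : ℕ) (hk : (Finset.univ.filter P).card = k) :
    k ≤ ((Finset.univ.filter P).filter fun j => j < i).card + (n - 1 - (i : ℕ)) := by
  classical
  set S := Finset.univ.filter P with hS
  set T := S.filter (fun j => j < i) with hT
  have hsub : S \ T ⊆ Finset.Ioi i := by
    intro j hj
    simp only [hT, Finset.mem_sdiff, Finset.mem_filter, not_and] at hj
    have hji : ¬ j < i := fun hc => hj.2 hj.1 hc
    have hne : j ≠ i := by
      rintro rfl
      simp only [hS, Finset.mem_filter] at hj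
      exact hP hj.1.2
    simp only [Finset.mem_Ioi]
    exact lt_of_le_of_ne (le_of_not_gt hji) (Ne.symm hne)
  have h1 : (S \ T).card ≤ n - 1 - (i : ℕ) := by
    have := Finset.card_le_card hsub
    simpa using this
  have h2 : S.card ≤ T.card + (S \ T).card := by
    have := Finset.card_sdiff_add_card_eq_card (Finset.filter_subset (fun j => j < i) S)
    rw [← hT] at this
    omega
  omega

include hav

lemma av_ub (i : Fin n) : (π i : ℕ) ≤ (i : ℕ) + 2 := by
  by_contra hc
  push_neg at hc
  set S := Finset.univ.filter (fun j => π j < π i) with hS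
  have hcard : S.card = (π i : ℕ) := card_lt_val π (π i)
  have hT := filter_above_card π (fun j => π j < π i) i (lt_irrefl _) _ hcard
  set T := S.filter (fun j => i < j) with hT'
  have hT3 : 3 ≤ T.card := by omega
  obtain ⟨a, b, c, ha, hb, hc3, hab, hbc⟩ := exists_three hT3
  simp only [hT', hS, Finset.mem_filter, Finset.mem_univ, true_and] at ha hb hc3
  rcases lt_trichotomy (π a) (π b) with h | h | h
  · exact hav [3,1,2] (by simp [Pats]) (contains312 π i a b ha.2 hab h hb.1)
  · exact absurd (π.injective h) (ne_of_lt hab)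
  · rcases lt_trichotomy (π b) (π c) with h' | h' | h'
    · exact hav [3,1,2] (by simp [Pats]) (contains312 π i b c hb.2 hbc h' hc3.1)
    · exact absurd (π.injective h') (ne_of_lt hbc)
    · exact hav [4,3,2,1] (by simp [Pats]) (contains4321 π i a b c ha.2 hab hbc h' h ha.1)

lemma av_lb (i : Fin n) : (i : ℕ) ≤ (π i : ℕ) + 2 := by
  by_contra hc
  push_neg at hc
  set S := Finset.univ.filter (fun j => π i < π j) with hS
  have hcard : S.card = n - 1 - (π i : ℕ) := card_gt_val π (π i)
  have hT := filter_below_card (fun j => π i < π j) i (lt_irrefl _) _ hcard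
  set T := S.filter (fun j => j < i) with hT'
  have hin : (i : ℕ) < n := i.isLt
  have hT3 : 3 ≤ T.card := by omega
  obtain ⟨a, b, c, ha, hb, hc3, hab, hbc⟩ := exists_three hT3
  simp only [hT', hS, Finset.mem_filter, Finset.mem_univ, true_and] at ha hb hc3
  rcases lt_trichotomy (π a) (π b) with h | h | h
  · exact hav [2,3,1] (by simp [Pats]) (contains231 π a b i hab hb.2 ha.1 h)
  · exact absurd (π.injective h) (ne_of_lt hab)
  · rcases lt_trichotomy (π b) (π c) with h' | h' | h'
    · exact hav [2,3,1] (by simp [Pats]) (contains231 π b c i hbc hc3.2 hb.1 h')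
    · exact absurd (π.injective h') (ne_of_lt hbc)
    · exact hav [4,3,2,1] (by simp [Pats]) (contains4321 π a b c i hab hbc hc3.2 hc3.1 h' h)

lemma av3 (i : Fin n) (h : (π i : ℕ) = (i : ℕ) + 1) : π (π i) = i := by
  set p := π.symm i with hpdef
  have hp : π p = i := π.apply_symm_apply i
  have hpne : (p : ℕ) ≠ (i : ℕ) := by
    intro hc
    have hpi : p = i := Fin.ext hc
    rw [hpi] at hp
    rw [hp] at h; omega
  have hplb : (p : ℕ) ≤ (π p : ℕ) + 2 := av_lb hav p
  rw [hp] at hplb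
  by_cases hpi : (p : ℕ) < (i : ℕ)
  · set S := Finset.univ.filter (fun j => π j < π i) with hS
    have hcard : S.card = (i : ℕ) + 1 := by rw [card_lt_val π (π i), h]
    have hT := filter_above_card π (fun j => π j < π i) i (lt_irrefl _) _ hcard
    set T := S.filter (fun j => i < j) with hT'
    have hTpos : 0 < T.card := by omega
    obtain ⟨j, hj⟩ := Finset.card_pos.mp hTpos
    simp only [hT', hS, Finset.mem_filter, Finset.mem_univ, true_and] at hj
    have hjb : (π j : ℕ) < (i : ℕ) + 1 := by
      have := hj.1; rw [Fin.lt_def] at this; omega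
    have hjne : (π j : ℕ) ≠ (i : ℕ) := by
      intro hc
      have hjp : j = p := pinj π (by rw [hp]; exact hc)
      rw [hjp] at hj
      have := hj.2; rw [Fin.lt_def] at this; omega
    refine absurd (contains231 π p i j ?_ hj.2 ?_ ?_) (hav [2,3,1] (by simp [Pats])) <;>
      rw [Fin.lt_def]
    · exact hpi
    · rw [hp]; omega
    · rw [hp]; omega
  · have hpub : (p : ℕ) ≤ (i : ℕ) + 2 := by omega
    rcases Nat.lt_or_ge (p : ℕ) ((i : ℕ) + 2) with hp1 | hp2
    · have hpb : p = π i := Fin.ext (by omega)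
      rw [← hpb, hp]
    · have hpv : (p : ℕ) = (i : ℕ) + 2 := by omega
      have hbub : (π (π i) : ℕ) ≤ (π i : ℕ) + 2 := av_ub hav (π i)
      have hblb : (π i : ℕ) ≤ (π (π i) : ℕ) + 2 := av_lb hav (π i)
      have hb0 : (π (π i) : ℕ) ≠ (i : ℕ) := by
        intro hc
        have hbp : π i = p := pinj π (by rw [hp]; exact hc)
        have : (π i : ℕ) = (p : ℕ) := by rw [hbp]
        omega
      have hb1 : (π (π i) : ℕ) ≠ (i : ℕ) + 1 := by
        intro hc
        have hbi : π i = i := pinj π (hc.trans h.symm)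
        rw [hbi] at h; omega
      rcases Nat.lt_or_ge (π (π i) : ℕ) ((i : ℕ) + 1) with hA | hA
      · refine absurd (contains312 π i (π i) p ?_ ?_ ?_ ?_) (hav [3,1,2] (by simp [Pats])) <;>
          rw [Fin.lt_def]
        · omega
        · omega
        · rw [hp]; omega
        · rw [hp]; omega
      · refine absurd (contains231 π i (π i) p ?_ ?_ ?_ ?_) (hav [2,3,1] (by simp [Pats])) <;>
          rw [Fin.lt_def]
        · omega
        · omega
        · rw [hp]; omega
        · omega

end AvoidsGood
section AvoidsGood2
variable {n : ℕ} {π : Equiv.Perm (Fin n)} (hav : AvoidsAll π Pats)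
include hav

lemma av4 (i : Fin n) (h : (π i : ℕ) = (i : ℕ) + 2) :
    π (π i) = i ∧ (∀ m : Fin n, (m : ℕ) = (i : ℕ) + 1 → π m = m) ∧
      (∀ j : Fin n, j < i → π j = j) := by
  have hin : (i : ℕ) + 2 < n := by have := (π i).isLt; omega
  set m0 : Fin n := ⟨(i : ℕ) + 1, by omega⟩ with hm0
  have hm0v : (m0 : ℕ) = (i : ℕ) + 1 := rfl
  set p := π.symm i with hpdef
  have hp : π p = i := π.apply_symm_apply i
  have hpne : (p : ℕ) ≠ (i : ℕ) := by
    intro hc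
    have hpi : p = i := Fin.ext hc
    rw [hpi] at hp
    rw [hp] at h; omega
  have hplb : (p : ℕ) ≤ (i : ℕ) + 2 := by
    have := av_lb hav p; rw [hp] at this; exact this
  set q := π.symm m0 with hqdef
  have hq : π q = m0 := π.apply_symm_apply m0
  have hqv : (π q : ℕ) = (i : ℕ) + 1 := by rw [hq]
  -- Step 1 : ¬ p < i
  have hpge : ¬ (p : ℕ) < (i : ℕ) := by
    intro hpi
    set S := Finset.univ.filter (fun j => π j < π i) with hS
    have hcard : S.card = (i : ℕ) + 2 := by rw [card_lt_val π (π i), h]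
    have hT := filter_above_card π (fun j => π j < π i) i (lt_irrefl _) _ hcard
    set T := S.filter (fun j => i < j) with hT'
    have hT2 : 1 < T.card := by omega
    obtain ⟨j1, hj1, j2, hj2, hne12⟩ := Finset.one_lt_card.mp hT2
    have hpick : ∃ j, j ∈ T ∧ (π j : ℕ) ≠ (i : ℕ) + 1 := by
      by_cases hc1 : (π j1 : ℕ) = (i : ℕ) + 1
      · refine ⟨j2, hj2, fun hc2 => hne12 ?_⟩
        exact (pinj π (hc1.trans hc2.symm)).symm ▸ rfl
      · exact ⟨j1, hj1, hc1⟩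
    obtain ⟨j, hjT, hjne1⟩ := hpick
    simp only [hT', hS, Finset.mem_filter, Finset.mem_univ, true_and] at hjT
    have hjlt : (π j : ℕ) < (i : ℕ) + 2 := by
      have := hjT.1; rw [Fin.lt_def, h] at this; exact this
    have hjne0 : (π j : ℕ) ≠ (i : ℕ) := by
      intro hc
      have : j = p := pinj π (by rw [hp]; exact hc)
      rw [this] at hjT
      have := hjT.2; rw [Fin.lt_def] at this; omega
    refine absurd (contains231 π p i j ?_ hjT.2 ?_ ?_) (hav [2,3,1] (by simp [Pats])) <;>
      rw [Fin.lt_def]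
    · exact hpi
    · rw [hp]; omega
    · rw [hp]; omega
  -- Step 2 : p ≠ i + 1
  have hpv : (p : ℕ) = (i : ℕ) + 2 := by
    rcases Nat.lt_or_ge (p : ℕ) ((i : ℕ) + 2) with hp1 | hp2
    · exfalso
      have hpm : (p : ℕ) = (i : ℕ) + 1 := by omega
      have hqi : (q : ℕ) ≠ (i : ℕ) := by
        intro hc
        have : q = i := Fin.ext hc
        rw [this] at hqv; omega
      have hqp : (q : ℕ) ≠ (p : ℕ) := by
        intro hc
        have : q = p := Fin.ext hc
        rw [this, hp] at hqv; omega
      have hqlb : (q : ℕ) ≤ (i : ℕ) + 3 := by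
        have := av_lb hav q; omega
      rcases Nat.lt_or_ge (q : ℕ) (i : ℕ) with hq1 | hq2
      · refine absurd (contains231 π q i p ?_ ?_ ?_ ?_) (hav [2,3,1] (by simp [Pats])) <;>
          rw [Fin.lt_def]
        · exact hq1
        · omega
        · rw [hp]; omega
        · omega
      · have hq3 : (q : ℕ) = (i : ℕ) + 2 ∨ (q : ℕ) = (i : ℕ) + 3 := by omega
        rcases hq3 with hq3 | hq3
        · refine absurd (contains312 π i p q ?_ ?_ ?_ ?_) (hav [3,1,2] (by simp [Pats])) <;>
            rw [Fin.lt_def]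
          · omega
          · omega
          · rw [hp]; omega
          · omega
        · have hrn : (i : ℕ) + 3 < n := by rw [← hq3]; exact q.isLt
          set r : Fin n := ⟨(i : ℕ) + 2, by omega⟩ with hr
          have hrv : (r : ℕ) = (i : ℕ) + 2 := rfl
          have hrlb : (r : ℕ) ≤ (π r : ℕ) + 2 := av_lb hav r
          have hr0 : (π r : ℕ) ≠ (i : ℕ) := by
            intro hc
            have : r = p := pinj π (by rw [hp]; exact hc)
            have := congrArg Fin.val this; rw [hrv] at this; omega
          have hr1 : (π r : ℕ) ≠ (i : ℕ) + 1 := by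
            intro hc
            have : r = q := pinj π (by rw [hqv]; exact hc)
            have := congrArg Fin.val this; rw [hrv] at this; omega
          have hr2 : (π r : ℕ) ≠ (i : ℕ) + 2 := by
            intro hc
            have : r = i := pinj π (by rw [h]; exact hc)
            have := congrArg Fin.val this; rw [hrv] at this; omega
          refine absurd (contains231 π i r q ?_ ?_ ?_ ?_) (hav [2,3,1] (by simp [Pats])) <;>
            rw [Fin.lt_def]
          · omega
          · omega
          · omega
          · omega
    · omega
  -- part 1
  have hpb : p = π i := Fin.ext (by omega)
  have part1 : π (π i) = i := by rw [← hpb, hp]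
  -- part 2
  have part2 : ∀ m : Fin n, (m : ℕ) = (i : ℕ) + 1 → π m = m := by
    intro m hm
    have hmm0 : m = m0 := Fin.ext (by rw [hm, hm0v])
    rw [hmm0]
    have hub := av_ub hav m0
    have hlb := av_lb hav m0
    have h0 : (π m0 : ℕ) ≠ (i : ℕ) := by
      intro hc
      have : m0 = π i := pinj π (by rw [part1]; exact hc)
      have := congrArg Fin.val this; omega
    have h2 : (π m0 : ℕ) ≠ (i : ℕ) + 2 := by
      intro hc
      have : m0 = i := pinj π (by rw [h]; exact hc)
      have := congrArg Fin.val this; omega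
    rcases Nat.lt_or_ge (π m0 : ℕ) ((i : ℕ) + 1) with hA | hA
    · -- π m = i - 1 : 312 at (i, m, π i)
      exfalso
      refine absurd (contains312 π i m0 (π i) ?_ ?_ ?_ ?_) (hav [3,1,2] (by simp [Pats])) <;>
        rw [Fin.lt_def]
      · omega
      · omega
      · rw [part1]; omega
      · rw [part1]; omega
    · rcases Nat.lt_or_ge ((i : ℕ) + 1) (π m0 : ℕ) with hB | hB
      · -- π m = i + 3 : 231 at (i, m, π i)
        exfalso
        refine absurd (contains231 π i m0 (π i) ?_ ?_ ?_ ?_) (hav [2,3,1] (by simp [Pats])) <;>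
          rw [Fin.lt_def]
        · omega
        · omega
        · rw [part1]; omega
        · omega
      · exact Fin.ext (by omega)
  -- part 3
  have hm0fix : π m0 = m0 := part2 m0 rfl
  have hsmall : ∀ j : Fin n, j < i → (π j : ℕ) < (i : ℕ) := by
    intro j hj
    rw [Fin.lt_def] at hj
    have hub := av_ub hav j
    have h1 : (π j : ℕ) ≠ (i : ℕ) + 1 := by
      intro hc
      have : j = m0 := pinj π (by rw [hm0fix, hm0v]; exact hc)
      have := congrArg Fin.val this; rw [hm0v] at this; omega
    have h0 : (π j : ℕ) ≠ (i : ℕ) := by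
      intro hc
      have : j = π i := pinj π (by rw [part1]; exact hc)
      have := congrArg Fin.val this; omega
    omega
  refine ⟨part1, part2, ?_⟩
  by_contra hbad
  push_neg at hbad
  obtain ⟨j, hji, hjne⟩ := hbad
  set B := Finset.univ.filter (fun t : Fin n => t < i ∧ π t ≠ t) with hB
  have hBne : B.Nonempty := ⟨j, by simp [hB, hji, hjne]⟩
  set j0 := B.min' hBne with hj0def
  have hj0B : j0 ∈ B := B.min'_mem hBne
  simp only [hB, Finset.mem_filter, Finset.mem_univ, true_and] at hj0B
  have hfix : ∀ t : Fin n, t < j0 → π t = t := by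
    intro t ht
    by_contra htne
    have htB : t ∈ B := by
      simp only [hB, Finset.mem_filter, Finset.mem_univ, true_and]
      exact ⟨ht.trans hj0B.1, htne⟩
    exact absurd (B.min'_le t htB) (not_le.mpr ht)
  have hj0up : (j0 : ℕ) < (π j0 : ℕ) := by
    rcases lt_trichotomy (π j0) j0 with hA | hA | hA
    · exact absurd (π.injective (hfix (π j0) hA)) hj0B.2
    · exact absurd hA hj0B.2
    · exact Fin.lt_def.mp hA
  set p0 := π.symm j0 with hp0def
  have hp0 : π p0 = j0 := π.apply_symm_apply j0
  have hp0gt : (j0 : ℕ) < (p0 : ℕ) := by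
    rcases lt_trichotomy p0 j0 with hA | hA | hA
    · exfalso
      have := hfix p0 hA
      rw [this] at hp0
      rw [hp0] at hA
      exact lt_irrefl _ hA
    · exfalso; rw [hA] at hp0; exact hj0B.2 hp0
    · exact Fin.lt_def.mp hA
  have hj0i : (j0 : ℕ) < (i : ℕ) := Fin.lt_def.mp hj0B.1
  have hp0ub : (p0 : ℕ) ≤ (j0 : ℕ) + 2 := by
    have := av_lb hav p0; rw [hp0] at this; exact this
  have hp0i : (p0 : ℕ) ≠ (i : ℕ) := by
    intro hc
    have : p0 = i := Fin.ext hc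
    rw [this] at hp0
    have := congrArg Fin.val hp0; omega
  have hp0m : (p0 : ℕ) ≠ (i : ℕ) + 1 := by
    intro hc
    have : p0 = m0 := Fin.ext (by rw [hm0v]; exact hc)
    rw [this, hm0fix] at hp0
    have := congrArg Fin.val hp0; rw [hm0v] at this; omega
  have hp0lti : (p0 : ℕ) < (i : ℕ) := by omega
  have hj0small : (π j0 : ℕ) < (i : ℕ) := hsmall j0 hj0B.1
  refine absurd (contains21543 π j0 p0 i m0 (π i) ?_ ?_ ?_ ?_ ?_ ?_ ?_ ?_)
    (hav [2,1,5,4,3] (by simp [Pats])) <;> rw [Fin.lt_def]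
  · exact hp0gt
  · exact hp0lti
  · rw [hm0v]; omega
  · rw [hm0v]; omega
  · rw [hp0]; omega
  · rw [part1]; omega
  · rw [part1, hm0fix, hm0v]; omega
  · rw [hm0fix, hm0v]; omega

lemma av5 (i w : Fin n) (hiw : (i : ℕ) = (w : ℕ) + 1) (hw : π i = w) : π w = i := by
  have hwne : (π w : ℕ) ≠ (w : ℕ) := by
    intro hc
    have : π w = w := Fin.ext hc
    have : w = i := π.injective (by rw [this, hw])
    have := congrArg Fin.val this; omega
  have hub := av_ub hav w
  have hlb := av_lb hav w
  rcases Nat.lt_or_ge (w : ℕ) (π w : ℕ) with hA | hA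
  · rcases Nat.lt_or_ge ((w : ℕ) + 1) (π w : ℕ) with hB | hB
    · -- π w = w + 2 : mid of block at w is i, so π i = i, contra
      exfalso
      have h2 : (π w : ℕ) = (w : ℕ) + 2 := by omega
      have := (av4 hav w h2).2.1 i hiw
      rw [hw] at this
      have := congrArg Fin.val this; omega
    · exact Fin.ext (by omega)
  · -- π w < w : pigeonhole for a position below w with large value
    exfalso
    by_cases hex : ∃ p : Fin n, (p : ℕ) < (w : ℕ) ∧ (w : ℕ) ≤ (π p : ℕ)
    · obtain ⟨p, hp1, hp2⟩ := hex
      have hpub := av_ub hav p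
      have hpne : (π p : ℕ) ≠ (w : ℕ) := by
        intro hc
        have : p = i := pinj π (by rw [hw]; exact hc)
        have := congrArg Fin.val this; omega
      have hpv : (π p : ℕ) = (p : ℕ) + 2 := by omega
      have hmid := (av4 hav p hpv).2.1 w (by omega)
      exact hwne (by rw [hmid])
    · push_neg at hex
      have hmaps : ∀ t : Fin n, t ∈ Finset.Iic w → π t ∈ Finset.Iio w := by
        intro t ht
        rw [Finset.mem_Iic] at ht
        rw [Finset.mem_Iio, Fin.lt_def]
        rcases eq_or_lt_of_le ht with rfl | hlt
        · omega
        · exact hex t (Fin.lt_def.mp hlt)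
      have hcard := Finset.card_le_card_of_injOn π hmaps (π.injective.injOn)
      rw [Fin.card_Iic, Fin.card_Iio] at hcard
      omega

lemma av6 : ∀ k : ℕ, ∀ i w : Fin n, (i : ℕ) = k → (i : ℕ) = (w : ℕ) + 2 → π i = w → π w = i := by
  intro k
  induction k using Nat.strong_induction_on with
  | _ k IH =>
    intro i w hk h2 hiw
    have hub := av_ub hav w
    have hlb := av_lb hav w
    have hwne : (π w : ℕ) ≠ (w : ℕ) := by
      intro hc
      have : π w = w := Fin.ext hc
      have : w = i := π.injective (by rw [this, hiw])
      have := congrArg Fin.val this; omega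
    rcases Nat.lt_or_ge (w : ℕ) (π w : ℕ) with hA | hA
    · rcases Nat.lt_or_ge ((w : ℕ) + 1) (π w : ℕ) with hB | hB
      · exact Fin.ext (by omega)
      · -- π w = w + 1 : av3 gives π (π w) = w, so π w = i? no: value w+1 position...
        exfalso
        have hwv : (π w : ℕ) = (w : ℕ) + 1 := by omega
        have h3 := av3 hav w hwv
        have : π w = i := pinj π (by rw [h3, hiw])
        have := congrArg Fin.val this; omega
    · rcases Nat.lt_or_ge ((π w : ℕ) + 1) (w : ℕ) with hB | hB
      · -- π w = w - 2 : apply IH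
        exfalso
        have hwv : (w : ℕ) = (π w : ℕ) + 2 := by omega
        have h6 := IH (w : ℕ) (by omega) w (π w) rfl hwv rfl
        have : π w = i := pinj π (by rw [h6, hiw])
        have := congrArg Fin.val this; omega
      · -- π w = w - 1 : av5 applied to (w, π w)
        exfalso
        have hwv : (w : ℕ) = (π w : ℕ) + 1 := by omega
        have h5 := av5 hav w (π w) hwv rfl
        have : π w = i := pinj π (by rw [h5, hiw])
        have := congrArg Fin.val this; omega

omit hav in
theorem avoids_good (hg : AvoidsAll π Pats) : Good π := by
  intro i
  have hub := av_ub hg i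
  have hlb := av_lb hg i
  refine ⟨?_, hub, hlb, fun h => (av4 hg i h).2.2⟩
  rcases Nat.lt_trichotomy (π i : ℕ) (i : ℕ) with hA | hA | hA
  · rcases Nat.lt_or_ge ((π i : ℕ) + 1) (i : ℕ) with hB | hB
    · exact av6 hg (i : ℕ) i (π i) rfl (by omega) rfl
    · exact av5 hg i (π i) (by omega) rfl
  · have : π i = i := Fin.ext hA
    rw [this, this]
  · rcases Nat.lt_or_ge ((i : ℕ) + 1) (π i : ℕ) with hB | hB
    · exact (av4 hg i (by omega)).1
    · exact av3 hg i (by omega)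

end AvoidsGood2
section DsumInfra

def Good2 {n : ℕ} (π : Equiv.Perm (Fin n)) : Prop :=
  Good π ∧ ∀ i : Fin n, (π i : ℕ) ≠ (i : ℕ) + 2

instance : ∀ {m : ℕ}, DecidablePred (@Good2 m) := fun {m} π => by
  unfold Good2; infer_instance

lemma dsum_castAdd {k t : ℕ} (β : Equiv.Perm (Fin k)) (σ : Equiv.Perm (Fin t)) (x : Fin k) :
    dsum β σ (Fin.castAdd t x) = Fin.castAdd t (β x) := by
  simp [dsum, finSumFinEquiv_symm_apply_castAdd, finSumFinEquiv_apply_left]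

lemma dsum_natAdd {k t : ℕ} (β : Equiv.Perm (Fin k)) (σ : Equiv.Perm (Fin t)) (j : Fin t) :
    dsum β σ (Fin.natAdd k j) = Fin.natAdd k (σ j) := by
  simp [dsum, finSumFinEquiv_symm_apply_natAdd, finSumFinEquiv_apply_right]

lemma fin_split {k t : ℕ} (y : Fin (k + t)) :
    (∃ x : Fin k, y = Fin.castAdd t x) ∨ (∃ j : Fin t, y = Fin.natAdd k j) := by
  rcases Nat.lt_or_ge (y : ℕ) k with h | h
  · exact Or.inl ⟨⟨(y : ℕ), h⟩, Fin.ext rfl⟩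
  · refine Or.inr ⟨⟨(y : ℕ) - k, by have := y.isLt; omega⟩, Fin.ext ?_⟩
    simp [Fin.coe_natAdd]
    omega

lemma dsum_inj {k t : ℕ} (β : Equiv.Perm (Fin k)) (σ1 σ2 : Equiv.Perm (Fin t))
    (h : dsum β σ1 = dsum β σ2) : σ1 = σ2 := by
  apply Equiv.ext
  intro j
  have h1 : dsum β σ1 (Fin.natAdd k j) = dsum β σ2 (Fin.natAdd k j) := by rw [h]
  rw [dsum_natAdd, dsum_natAdd] at h1
  have := congrArg Fin.val h1
  simp only [Fin.coe_natAdd] at this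
  exact Fin.ext (by omega)

lemma eq_dsum_of_front {k t : ℕ} (β : Equiv.Perm (Fin k)) (π : Equiv.Perm (Fin (k + t)))
    (hfront : ∀ x : Fin k, π (Fin.castAdd t x) = Fin.castAdd t (β x)) :
    ∃ σ : Equiv.Perm (Fin t), π = dsum β σ := by
  have hge : ∀ j : Fin t, k ≤ (π (Fin.natAdd k j) : ℕ) := by
    intro j
    by_contra hc
    push_neg at hc
    obtain ⟨x, hx⟩ := β.surjective ⟨(π (Fin.natAdd k j) : ℕ), hc⟩
    have heq : π (Fin.castAdd t x) = π (Fin.natAdd k j) := by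
      rw [hfront x, hx]
      exact Fin.ext rfl
    have := congrArg Fin.val (π.injective heq)
    simp only [Fin.coe_castAdd, Fin.coe_natAdd] at this
    have := x.isLt
    omega
  set g : Fin t → Fin t := fun j => ⟨(π (Fin.natAdd k j) : ℕ) - k, by
    have h1 := (π (Fin.natAdd k j)).isLt
    have h2 := hge j
    omega⟩ with hgdef
  have hginj : Function.Injective g := by
    intro a b hab
    have h1 := hge a
    have h2 := hge b
    have hv := congrArg Fin.val hab
    simp only [hgdef] at hv
    have hv2 : (π (Fin.natAdd k a) : ℕ) = (π (Fin.natAdd k b) : ℕ) := by omega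
    have := congrArg Fin.val (π.injective (Fin.ext hv2))
    simp only [Fin.coe_natAdd] at this
    exact Fin.ext (by omega)
  have hgbij := Finite.injective_iff_bijective.mp hginj
  refine ⟨Equiv.ofBijective g hgbij, ?_⟩
  apply Equiv.ext
  intro i
  rcases fin_split i with ⟨x, rfl⟩ | ⟨j, rfl⟩
  · rw [hfront x, dsum_castAdd]
  · rw [dsum_natAdd]
    have hσ : (Equiv.ofBijective g hgbij) j = g j := rfl
    rw [hσ]
    refine Fin.ext ?_
    simp only [Fin.coe_natAdd, hgdef]
    have := hge j
    omega

lemma dsum_val_natAdd {k t : ℕ} (β : Equiv.Perm (Fin k)) (σ : Equiv.Perm (Fin t)) (j : Fin t) :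
    ((dsum β σ) (Fin.natAdd k j) : ℕ) = k + (σ j : ℕ) := by
  rw [dsum_natAdd]; rfl

lemma natAdd_lt_iff {k t : ℕ} (a b : Fin t) : Fin.natAdd k a < Fin.natAdd k b ↔ a < b := by
  rw [Fin.lt_def, Fin.lt_def]
  simp only [Fin.coe_natAdd]
  omega

lemma natAdd_inj {k t : ℕ} {a b : Fin t} (h : Fin.natAdd k a = Fin.natAdd k b) : a = b := by
  have := congrArg Fin.val h
  simp only [Fin.coe_natAdd] at this
  exact Fin.ext (by omega)

lemma good_dsum_iff {k t : ℕ} (β : Equiv.Perm (Fin k))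
    (hβinv : ∀ x, β (β x) = x)
    (hβub : ∀ x : Fin k, (β x : ℕ) ≤ (x : ℕ) + 2)
    (hβlb : ∀ x : Fin k, (x : ℕ) ≤ (β x : ℕ) + 2)
    (hβblk : ∀ x x' : Fin k, (β x : ℕ) = (x : ℕ) + 2 → x' < x → β x' = x')
    (σ : Equiv.Perm (Fin t)) :
    Good (dsum β σ) ↔
      (Good σ ∧ ((∃ x : Fin k, β x ≠ x) → ∀ j : Fin t, (σ j : ℕ) ≠ (j : ℕ) + 2)) := by
  constructor
  · intro hg
    constructor
    · intro j
      obtain ⟨hinv, hub, hlb, hblk⟩ := hg (Fin.natAdd k j)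
      rw [dsum_natAdd, dsum_natAdd] at hinv
      rw [dsum_val_natAdd] at hub hlb
      rw [dsum_natAdd] at hblk
      refine ⟨natAdd_inj hinv, ?_, ?_, ?_⟩
      · simp only [Fin.coe_natAdd] at hub ⊢; omega
      · simp only [Fin.coe_natAdd] at hlb ⊢; omega
      · intro hj j' hj'
        have hval : ((Fin.natAdd k (σ j)) : ℕ) = ((Fin.natAdd k j) : ℕ) + 2 := by
          simp only [Fin.coe_natAdd]; omega
        have := hblk hval (Fin.natAdd k j') ((natAdd_lt_iff _ _).mpr hj')
        rw [dsum_natAdd] at this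
        exact natAdd_inj this
    · rintro ⟨x0, hx0⟩ j hj
      obtain ⟨hinv, hub, hlb, hblk⟩ := hg (Fin.natAdd k j)
      rw [dsum_natAdd] at hblk
      have hval : ((Fin.natAdd k (σ j)) : ℕ) = ((Fin.natAdd k j) : ℕ) + 2 := by
        simp only [Fin.coe_natAdd]; omega
      have hlt : Fin.castAdd t x0 < Fin.natAdd k j := by
        rw [Fin.lt_def]
        simp only [Fin.coe_castAdd, Fin.coe_natAdd]
        have := x0.isLt; omega
      have := hblk hval (Fin.castAdd t x0) hlt
      rw [dsum_castAdd] at this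
      have := congrArg Fin.val this
      simp only [Fin.coe_castAdd] at this
      exact hx0 (Fin.ext this)
  · rintro ⟨hgσ, hcond⟩ i
    rcases fin_split i with ⟨x, rfl⟩ | ⟨j, rfl⟩
    · refine ⟨?_, ?_, ?_, ?_⟩
      · rw [dsum_castAdd, dsum_castAdd, hβinv]
      · rw [dsum_castAdd]
        simp only [Fin.coe_castAdd]
        exact hβub x
      · rw [dsum_castAdd]
        simp only [Fin.coe_castAdd]
        exact hβlb x
      · intro hx y hy
        rw [dsum_castAdd] at hx
        simp only [Fin.coe_castAdd] at hx
        have hylt : (y : ℕ) < k := by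
          rw [Fin.lt_def] at hy
          simp only [Fin.coe_castAdd] at hy
          have := x.isLt; omega
        have hyx : y = Fin.castAdd t (⟨(y : ℕ), hylt⟩ : Fin k) := Fin.ext rfl
        rw [hyx, dsum_castAdd]
        have hlt : (⟨(y : ℕ), hylt⟩ : Fin k) < x := by
          rw [Fin.lt_def] at hy ⊢
          simpa using hy
        rw [hβblk x _ hx hlt]
    · refine ⟨?_, ?_, ?_, ?_⟩
      · rw [dsum_natAdd, dsum_natAdd, (hgσ j).1]
      · rw [dsum_val_natAdd]
        have := (hgσ j).2.1
        simp only [Fin.coe_natAdd]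
        omega
      · rw [dsum_val_natAdd]
        have := (hgσ j).2.2.1
        simp only [Fin.coe_natAdd]
        omega
      · intro hx y hy
        rw [dsum_val_natAdd] at hx
        simp only [Fin.coe_natAdd] at hx
        have hσj : (σ j : ℕ) = (j : ℕ) + 2 := by omega
        by_cases hex : ∃ x : Fin k, β x ≠ x
        · exact absurd hσj (hcond hex j)
        · push_neg at hex
          rcases fin_split y with ⟨x', rfl⟩ | ⟨j', rfl⟩
          · rw [dsum_castAdd, hex x']
          · rw [dsum_natAdd]
            have hj' : j' < j := by
              rw [Fin.lt_def] at hy ⊢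
              simp only [Fin.coe_natAdd] at hy
              omega
            rw [(hgσ j).2.2.2 hσj j' hj']

end DsumInfra
section CountingMain
open Finset

def eN (m : ℕ) : ℕ := (Finset.univ.filter fun π : Equiv.Perm (Fin m) => Good π).card
def sN (m : ℕ) : ℕ := (Finset.univ.filter fun π : Equiv.Perm (Fin m) => Good2 π).card
def eC (m c : ℕ) : ℕ := (Finset.univ.filter fun π : Equiv.Perm (Fin m) =>
  Good π ∧ ∀ z : Fin m, (z : ℕ) = 0 → (π z : ℕ) = c).card
def sC (m c : ℕ) : ℕ := (Finset.univ.filter fun π : Equiv.Perm (Fin m) =>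
  Good2 π ∧ ∀ z : Fin m, (z : ℕ) = 0 → (π z : ℕ) = c).card

lemma card_class {k t : ℕ} (β : Equiv.Perm (Fin k)) (hk : 0 < k)
    (h1 : ∀ x, β (β x) = x) (h2 : ∀ x : Fin k, (β x : ℕ) ≤ (x : ℕ) + 2)
    (h3 : ∀ x : Fin k, (x : ℕ) ≤ (β x : ℕ) + 2)
    (h4 : ∀ x x' : Fin k, (β x : ℕ) = (x : ℕ) + 2 → x' < x → β x' = x')
    (c : ℕ) (hc : (β ⟨0, hk⟩ : ℕ) = c)
    (hfrontdet : ∀ π : Equiv.Perm (Fin (k + t)), Good π →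
      (∀ z : Fin (k + t), (z : ℕ) = 0 → (π z : ℕ) = c) →
      ∀ x : Fin k, π (Fin.castAdd t x) = Fin.castAdd t (β x)) :
    (Finset.univ.filter fun σ : Equiv.Perm (Fin t) =>
      Good σ ∧ ((∃ x : Fin k, β x ≠ x) → ∀ j : Fin t, (σ j : ℕ) ≠ (j : ℕ) + 2)).card =
    (Finset.univ.filter fun π : Equiv.Perm (Fin (k + t)) =>
      Good π ∧ ∀ z : Fin (k + t), (z : ℕ) = 0 → (π z : ℕ) = c).card := by
  apply Finset.card_bij (fun σ _ => dsum β σ)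
  · intro σ hσ
    simp only [Finset.mem_filter, Finset.mem_univ, true_and] at hσ ⊢
    refine ⟨(good_dsum_iff β h1 h2 h3 h4 σ).mpr hσ, ?_⟩
    intro z hz
    have hz0 : z = Fin.castAdd t (⟨0, hk⟩ : Fin k) := Fin.ext (by simpa using hz)
    rw [hz0, dsum_castAdd]
    simpa using hc
  · intro σ1 h1' σ2 h2' heq
    exact dsum_inj β σ1 σ2 heq
  · intro π hπ
    simp only [Finset.mem_filter, Finset.mem_univ, true_and] at hπ
    obtain ⟨σ, rfl⟩ := eq_dsum_of_front β π (hfrontdet π hπ.1 hπ.2)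
    refine ⟨σ, ?_, rfl⟩
    simp only [Finset.mem_filter, Finset.mem_univ, true_and]
    exact (good_dsum_iff β h1 h2 h3 h4 σ).mp hπ.1

lemma card_class2 {k t : ℕ} (β : Equiv.Perm (Fin k)) (hk : 0 < k)
    (h1 : ∀ x, β (β x) = x) (h2 : ∀ x : Fin k, (β x : ℕ) ≤ (x : ℕ) + 2)
    (h3 : ∀ x : Fin k, (x : ℕ) ≤ (β x : ℕ) + 2)
    (h4 : ∀ x x' : Fin k, (β x : ℕ) = (x : ℕ) + 2 → x' < x → β x' = x')
    (h5 : ∀ x : Fin k, (β x : ℕ) ≠ (x : ℕ) + 2)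
    (c : ℕ) (hc : (β ⟨0, hk⟩ : ℕ) = c)
    (hfrontdet : ∀ π : Equiv.Perm (Fin (k + t)), Good π →
      (∀ z : Fin (k + t), (z : ℕ) = 0 → (π z : ℕ) = c) →
      ∀ x : Fin k, π (Fin.castAdd t x) = Fin.castAdd t (β x)) :
    (Finset.univ.filter fun σ : Equiv.Perm (Fin t) => Good2 σ).card =
    (Finset.univ.filter fun π : Equiv.Perm (Fin (k + t)) =>
      Good2 π ∧ ∀ z : Fin (k + t), (z : ℕ) = 0 → (π z : ℕ) = c).card := by
  apply Finset.card_bij (fun σ _ => dsum β σ)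
  · intro σ hσ
    simp only [Finset.mem_filter, Finset.mem_univ, true_and] at hσ ⊢
    refine ⟨⟨(good_dsum_iff β h1 h2 h3 h4 σ).mpr ⟨hσ.1, fun _ j => hσ.2 j⟩, ?_⟩, ?_⟩
    · intro i
      rcases fin_split i with ⟨x, rfl⟩ | ⟨j, rfl⟩
      · rw [dsum_castAdd]
        simp only [Fin.coe_castAdd]
        exact h5 x
      · rw [dsum_val_natAdd]
        simp only [Fin.coe_natAdd]
        have := hσ.2 j
        omega
    · intro z hz
      have hz0 : z = Fin.castAdd t (⟨0, hk⟩ : Fin k) := Fin.ext (by simpa using hz)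
      rw [hz0, dsum_castAdd]
      simpa using hc
  · intro σ1 h1' σ2 h2' heq
    exact dsum_inj β σ1 σ2 heq
  · intro π hπ
    simp only [Finset.mem_filter, Finset.mem_univ, true_and] at hπ
    obtain ⟨σ, rfl⟩ := eq_dsum_of_front β π (hfrontdet π hπ.1.1 hπ.2)
    refine ⟨σ, ?_, rfl⟩
    simp only [Finset.mem_filter, Finset.mem_univ, true_and]
    refine ⟨((good_dsum_iff β h1 h2 h3 h4 σ).mp hπ.1.1).1, ?_⟩
    intro j hj
    have := hπ.1.2 (Fin.natAdd k j)
    rw [dsum_val_natAdd] at this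
    simp only [Fin.coe_natAdd] at this
    omega

def β1 : Equiv.Perm (Fin 1) := 1
def β2 : Equiv.Perm (Fin 2) := Equiv.swap 0 1
def β3 : Equiv.Perm (Fin 3) := Fin.revPerm

-- front determination lemmas
lemma front1 {t : ℕ} (π : Equiv.Perm (Fin (1 + t))) (hg : Good π)
    (hz : ∀ z : Fin (1 + t), (z : ℕ) = 0 → (π z : ℕ) = 0) :
    ∀ x : Fin 1, π (Fin.castAdd t x) = Fin.castAdd t (β1 x) := by
  intro x
  have hx : (x : ℕ) = 0 := by omega
  have : (π (Fin.castAdd t x) : ℕ) = 0 := hz _ (by simpa using hx)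
  refine Fin.ext ?_
  rw [this]
  simp [β1, hx]

lemma front2 {t : ℕ} (π : Equiv.Perm (Fin (2 + t))) (hg : Good π)
    (hz : ∀ z : Fin (2 + t), (z : ℕ) = 0 → (π z : ℕ) = 1) :
    ∀ x : Fin 2, π (Fin.castAdd t x) = Fin.castAdd t (β2 x) := by
  intro x
  obtain ⟨z0, hv0⟩ : ∃ z : Fin (2 + t), (z : ℕ) = 0 := ⟨⟨0, by omega⟩, rfl⟩
  obtain ⟨z1, hv1⟩ : ∃ z : Fin (2 + t), (z : ℕ) = 1 := ⟨⟨1, by omega⟩, rfl⟩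
  have h0 : (π z0 : ℕ) = 1 := hz z0 hv0
  have h0' : π z0 = z1 := Fin.ext (by omega)
  have h1 : π z1 = z0 := by rw [← h0']; exact good_inv hg z0
  obtain ⟨xv, hxlt⟩ := x
  have hcv : (Fin.castAdd t (⟨xv, hxlt⟩ : Fin 2) : ℕ) = xv := rfl
  interval_cases xv
  · have hca : Fin.castAdd t (⟨0, hxlt⟩ : Fin 2) = z0 := Fin.ext (by omega)
    rw [hca, h0']
    refine Fin.ext ?_
    rw [hv1]
    rfl
  · have hca : Fin.castAdd t (⟨1, hxlt⟩ : Fin 2) = z1 := Fin.ext (by omega)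
    rw [hca, h1]
    refine Fin.ext ?_
    rw [hv0]
    rfl

lemma front3 {t : ℕ} (π : Equiv.Perm (Fin (3 + t))) (hg : Good π)
    (hz : ∀ z : Fin (3 + t), (z : ℕ) = 0 → (π z : ℕ) = 2) :
    ∀ x : Fin 3, π (Fin.castAdd t x) = Fin.castAdd t (β3 x) := by
  intro x
  obtain ⟨z0, hv0⟩ : ∃ z : Fin (3 + t), (z : ℕ) = 0 := ⟨⟨0, by omega⟩, rfl⟩
  obtain ⟨z1, hv1⟩ : ∃ z : Fin (3 + t), (z : ℕ) = 1 := ⟨⟨1, by omega⟩, rfl⟩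
  obtain ⟨z2, hv2⟩ : ∃ z : Fin (3 + t), (z : ℕ) = 2 := ⟨⟨2, by omega⟩, rfl⟩
  have h0 : (π z0 : ℕ) = 2 := hz z0 hv0
  have h0' : π z0 = z2 := Fin.ext (by omega)
  have h2 : π z2 = z0 := by rw [← h0']; exact good_inv hg z0
  have h1 : π z1 = z1 := good_mid hg (i := z0) (by omega) (by omega)
  obtain ⟨xv, hxlt⟩ := x
  have hcv : (Fin.castAdd t (⟨xv, hxlt⟩ : Fin 3) : ℕ) = xv := rfl
  interval_cases xv
  · have hca : Fin.castAdd t (⟨0, hxlt⟩ : Fin 3) = z0 := Fin.ext (by omega)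
    rw [hca, h0']
    refine Fin.ext ?_
    rw [hv2]
    rfl
  · have hca : Fin.castAdd t (⟨1, hxlt⟩ : Fin 3) = z1 := Fin.ext (by omega)
    rw [hca, h1]
    refine Fin.ext ?_
    rw [hv1]
    rfl
  · have hca : Fin.castAdd t (⟨2, hxlt⟩ : Fin 3) = z2 := Fin.ext (by omega)
    rw [hca, h2]
    refine Fin.ext ?_
    rw [hv0]
    rfl

lemma cls_e0 (m t : ℕ) (h : m = 1 + t) : eC m 0 = eN t := by
  subst h
  unfold eC eN
  have hcc := card_class (t := t) β1 (by omega) (by decide) (by decide) (by decide) (by decide)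
    0 (by decide) (fun π hg hz => front1 π hg hz)
  have hiff : ∀ σ : Equiv.Perm (Fin t),
      (Good σ ∧ ((∃ x : Fin 1, β1 x ≠ x) → ∀ j : Fin t, (σ j : ℕ) ≠ (j : ℕ) + 2)) ↔ Good σ :=
    fun σ => ⟨fun h => h.1, fun h => ⟨h, fun hex => absurd hex (by decide)⟩⟩
  rw [Finset.filter_congr (fun σ _ => hiff σ)] at hcc
  exact hcc.symm

lemma cls_e1 (m t : ℕ) (h : m = 2 + t) : eC m 1 = sN t := by
  subst h
  unfold eC sN
  have hcc := card_class (t := t) β2 (by omega) (by decide) (by decide) (by decide) (by decide)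
    1 (by decide) (fun π hg hz => front2 π hg hz)
  have hiff : ∀ σ : Equiv.Perm (Fin t),
      (Good σ ∧ ((∃ x : Fin 2, β2 x ≠ x) → ∀ j : Fin t, (σ j : ℕ) ≠ (j : ℕ) + 2)) ↔ Good2 σ :=
    fun σ => ⟨fun h => ⟨h.1, h.2 ⟨0, by decide⟩⟩, fun h => ⟨h.1, fun _ => h.2⟩⟩
  rw [Finset.filter_congr (fun σ _ => hiff σ)] at hcc
  exact hcc.symm

lemma cls_e2 (m t : ℕ) (h : m = 3 + t) : eC m 2 = sN t := by
  subst h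
  unfold eC sN
  have hcc := card_class (t := t) β3 (by omega) (by decide) (by decide) (by decide) (by decide)
    2 (by decide) (fun π hg hz => front3 π hg hz)
  have hiff : ∀ σ : Equiv.Perm (Fin t),
      (Good σ ∧ ((∃ x : Fin 3, β3 x ≠ x) → ∀ j : Fin t, (σ j : ℕ) ≠ (j : ℕ) + 2)) ↔ Good2 σ :=
    fun σ => ⟨fun h => ⟨h.1, h.2 ⟨0, by decide⟩⟩, fun h => ⟨h.1, fun _ => h.2⟩⟩
  rw [Finset.filter_congr (fun σ _ => hiff σ)] at hcc
  exact hcc.symm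

lemma cls_s0 (m t : ℕ) (h : m = 1 + t) : sC m 0 = sN t := by
  subst h
  unfold sC sN
  exact (card_class2 (t := t) β1 (by omega) (by decide) (by decide) (by decide) (by decide)
    (by decide) 0 (by decide) (fun π hg hz => front1 π hg hz)).symm

lemma cls_s1 (m t : ℕ) (h : m = 2 + t) : sC m 1 = sN t := by
  subst h
  unfold sC sN
  exact (card_class2 (t := t) β2 (by omega) (by decide) (by decide) (by decide) (by decide)
    (by decide) 1 (by decide) (fun π hg hz => front2 π hg hz)).symm

end CountingMain
section FinalCount

lemma split_e (m : ℕ) (hm : 0 < m) : eN m = eC m 0 + eC m 1 + eC m 2 := by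
  obtain ⟨z0, hv0⟩ : ∃ z : Fin m, (z : ℕ) = 0 := ⟨⟨0, hm⟩, rfl⟩
  unfold eN eC
  have key : (Finset.univ.filter fun π : Equiv.Perm (Fin m) => Good π) =
      ((Finset.univ.filter fun π : Equiv.Perm (Fin m) =>
          Good π ∧ ∀ z : Fin m, (z : ℕ) = 0 → (π z : ℕ) = 0) ∪
        (Finset.univ.filter fun π : Equiv.Perm (Fin m) =>
          Good π ∧ ∀ z : Fin m, (z : ℕ) = 0 → (π z : ℕ) = 1)) ∪
        (Finset.univ.filter fun π : Equiv.Perm (Fin m) =>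
          Good π ∧ ∀ z : Fin m, (z : ℕ) = 0 → (π z : ℕ) = 2) := by
    ext π
    simp only [Finset.mem_filter, Finset.mem_union, Finset.mem_univ, true_and]
    constructor
    · intro hg
      have hub := good_ub hg z0
      rw [hv0] at hub
      have hall : ∀ c : ℕ, (π z0 : ℕ) = c → ∀ z : Fin m, (z : ℕ) = 0 → (π z : ℕ) = c := by
        intro c hc z hz
        have hzz : z = z0 := Fin.ext (by omega)
        rw [hzz]; exact hc
      rcases Nat.lt_or_ge (π z0 : ℕ) 1 with h | h
      · exact Or.inl (Or.inl ⟨hg, hall 0 (by omega)⟩)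
      · rcases Nat.lt_or_ge (π z0 : ℕ) 2 with h2 | h2
        · exact Or.inl (Or.inr ⟨hg, hall 1 (by omega)⟩)
        · exact Or.inr ⟨hg, hall 2 (by omega)⟩
    · rintro ((⟨hg, _⟩ | ⟨hg, _⟩) | ⟨hg, _⟩) <;> exact hg
  have hd01 : Disjoint
      (Finset.univ.filter fun π : Equiv.Perm (Fin m) =>
        Good π ∧ ∀ z : Fin m, (z : ℕ) = 0 → (π z : ℕ) = 0)
      (Finset.univ.filter fun π : Equiv.Perm (Fin m) =>
        Good π ∧ ∀ z : Fin m, (z : ℕ) = 0 → (π z : ℕ) = 1) := by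
    apply Finset.disjoint_left.mpr
    intro π h1 h2
    simp only [Finset.mem_filter, Finset.mem_univ, true_and] at h1 h2
    have := h1.2 z0 hv0
    have := h2.2 z0 hv0
    omega
  have hd2 : Disjoint
      ((Finset.univ.filter fun π : Equiv.Perm (Fin m) =>
        Good π ∧ ∀ z : Fin m, (z : ℕ) = 0 → (π z : ℕ) = 0) ∪
       (Finset.univ.filter fun π : Equiv.Perm (Fin m) =>
        Good π ∧ ∀ z : Fin m, (z : ℕ) = 0 → (π z : ℕ) = 1))
      (Finset.univ.filter fun π : Equiv.Perm (Fin m) =>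
        Good π ∧ ∀ z : Fin m, (z : ℕ) = 0 → (π z : ℕ) = 2) := by
    apply Finset.disjoint_left.mpr
    intro π h1 h2
    simp only [Finset.mem_union, Finset.mem_filter, Finset.mem_univ, true_and] at h1 h2
    have := h2.2 z0 hv0
    rcases h1 with ⟨_, hc⟩ | ⟨_, hc⟩ <;> [have := hc z0 hv0; have := hc z0 hv0] <;> omega
  rw [key, Finset.card_union_of_disjoint hd2, Finset.card_union_of_disjoint hd01]

lemma split_s (m : ℕ) (hm : 0 < m) : sN m = sC m 0 + sC m 1 := by
  obtain ⟨z0, hv0⟩ : ∃ z : Fin m, (z : ℕ) = 0 := ⟨⟨0, hm⟩, rfl⟩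
  unfold sN sC
  have key : (Finset.univ.filter fun π : Equiv.Perm (Fin m) => Good2 π) =
      (Finset.univ.filter fun π : Equiv.Perm (Fin m) =>
          Good2 π ∧ ∀ z : Fin m, (z : ℕ) = 0 → (π z : ℕ) = 0) ∪
        (Finset.univ.filter fun π : Equiv.Perm (Fin m) =>
          Good2 π ∧ ∀ z : Fin m, (z : ℕ) = 0 → (π z : ℕ) = 1) := by
    ext π
    simp only [Finset.mem_filter, Finset.mem_union, Finset.mem_univ, true_and]
    constructor
    · intro hg
      have hub := good_ub hg.1 z0
      have hne := hg.2 z0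
      rw [hv0] at hub hne
      have hall : ∀ c : ℕ, (π z0 : ℕ) = c → ∀ z : Fin m, (z : ℕ) = 0 → (π z : ℕ) = c := by
        intro c hc z hz
        have hzz : z = z0 := Fin.ext (by omega)
        rw [hzz]; exact hc
      rcases Nat.lt_or_ge (π z0 : ℕ) 1 with h | h
      · exact Or.inl ⟨hg, hall 0 (by omega)⟩
      · exact Or.inr ⟨hg, hall 1 (by omega)⟩
    · rintro (⟨hg, _⟩ | ⟨hg, _⟩) <;> exact hg
  have hd01 : Disjoint
      (Finset.univ.filter fun π : Equiv.Perm (Fin m) =>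
        Good2 π ∧ ∀ z : Fin m, (z : ℕ) = 0 → (π z : ℕ) = 0)
      (Finset.univ.filter fun π : Equiv.Perm (Fin m) =>
        Good2 π ∧ ∀ z : Fin m, (z : ℕ) = 0 → (π z : ℕ) = 1) := by
    apply Finset.disjoint_left.mpr
    intro π h1 h2
    simp only [Finset.mem_filter, Finset.mem_univ, true_and] at h1 h2
    have := h1.2 z0 hv0
    have := h2.2 z0 hv0
    omega
  rw [key, Finset.card_union_of_disjoint hd01]

lemma sRec (t : ℕ) : sN (t + 2) = sN (t + 1) + sN t := by
  rw [split_s (t + 2) (by omega), cls_s0 (t + 2) (t + 1) (by omega), cls_s1 (t + 2) t (by omega)]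

lemma eRec (t : ℕ) : eN (t + 3) = eN (t + 2) + sN (t + 1) + sN t := by
  rw [split_e (t + 3) (by omega), cls_e0 (t + 3) (t + 2) (by omega),
    cls_e1 (t + 3) (t + 1) (by omega), cls_e2 (t + 3) t (by omega)]

lemma good_of_fin1 {m : ℕ} (hm : m ≤ 1) (π : Equiv.Perm (Fin m)) : Good2 π := by
  have hfix : ∀ i : Fin m, π i = i := by
    intro i
    have h1 := (π i).isLt
    have h2 := i.isLt
    exact Fin.ext (by omega)
  constructor
  · intro i
    rw [hfix, hfix]
    have : (π i : ℕ) = (i : ℕ) := by rw [hfix]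
    exact ⟨rfl, by omega, by omega, fun h => by omega⟩
  · intro i
    have : (π i : ℕ) = (i : ℕ) := by rw [hfix]
    omega

lemma sN0 : sN 0 = 1 := by
  unfold sN
  rw [Finset.filter_true_of_mem (fun π _ => good_of_fin1 (by omega) π),
    Finset.card_univ, Fintype.card_perm]
  rfl

lemma sN1 : sN 1 = 1 := by
  unfold sN
  rw [Finset.filter_true_of_mem (fun π _ => good_of_fin1 (by omega) π),
    Finset.card_univ, Fintype.card_perm]
  rfl

lemma eN1 : eN 1 = 1 := by
  unfold eN
  rw [Finset.filter_true_of_mem (fun π _ => (good_of_fin1 (by omega) π).1),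
    Finset.card_univ, Fintype.card_perm]
  rfl

lemma eN2 : eN 2 = 2 := by
  have : ∀ π : Equiv.Perm (Fin 2), Good π := by decide
  unfold eN
  rw [Finset.filter_true_of_mem (fun π _ => this π), Finset.card_univ, Fintype.card_perm]
  rfl

lemma fib'_pos : ∀ m, 1 ≤ fib' m := by
  intro m
  induction m using Nat.strong_induction_on with
  | _ m IH =>
    match m with
    | 0 => exact le_refl 1
    | 1 => exact le_refl 1
    | (k + 2) =>
      have h1 := IH (k + 1) (by omega)
      have h2 := IH k (by omega)
      show 1 ≤ fib' (k + 1) + fib' k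
      omega

lemma sForm : ∀ m, sN m = fib' m := by
  intro m
  induction m using Nat.strong_induction_on with
  | _ m IH =>
    match m with
    | 0 => exact sN0
    | 1 => exact sN1
    | (k + 2) =>
      rw [sRec k, IH (k + 1) (by omega), IH k (by omega)]
      rfl

lemma fib'_eq (a b c : ℕ) (hb : b = a + 1) (hc : c = a + 2) : fib' c = fib' b + fib' a := by
  subst hb; subst hc; rfl

lemma eForm : ∀ m, 1 ≤ m → eN m = fib' (m + 1) - 1 := by
  intro m
  induction m using Nat.strong_induction_on with
  | _ m IH =>
    match m with
    | 0 => intro h; omega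
    | 1 => intro _; rw [eN1]; rfl
    | 2 => intro _; rw [eN2]; rfl
    | (k + 3) =>
      intro _
      rw [eRec k, IH (k + 2) (by omega) (by omega), sForm (k + 1), sForm k]
      have h1 := fib'_eq (k + 2) (k + 2 + 1) (k + 3 + 1) rfl (by omega)
      have h3 := fib'_eq k (k + 1) (k + 2) rfl rfl
      have h4 := fib'_pos (k + 2 + 1)
      omega

end FinalCount

theorem stmt0 (n : ℕ) (hn : 1 ≤ n) :
    {π : Equiv.Perm (Fin n) | AvoidsAll π [[2,3,1],[3,1,2],[4,3,2,1],[2,1,5,4,3]]}.ncard = fib' (n + 1) - 1 := by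
  have hset : {π : Equiv.Perm (Fin n) | AvoidsAll π [[2,3,1],[3,1,2],[4,3,2,1],[2,1,5,4,3]]} =
      ↑(Finset.univ.filter fun π : Equiv.Perm (Fin n) => Good π) := by
    ext π
    simp only [Set.mem_setOf_eq, Finset.coe_filter, Finset.mem_univ, true_and]
    exact ⟨fun h => avoids_good h, fun h => good_avoids h⟩
  rw [hset, Set.ncard_coe_finset]
  exact eForm n hn
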